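/- Let A be a finite-dimensional commutative ℂ-algebra with a linear functional t_A: A → ℂ, and let E be a finite-dimensional ℂ-algebra with a linear functional t: E → ℂ satisfying t(x·y) = t(y·x) for all x, y ∈ E. Let τ_*: A → E and τ^*: E → A be linear maps satisfying the adjointness t(φ·τ_*(a)) = t_A(τ^*(φ)·a) for all φ ∈ E and a ∈ A, let P: E → E be a linear map, and let Q ∈ A. Suppose there is a basis (ψ_i)_{i ∈ I} of E and a family (ψ^i)_{i ∈ I} in E with t(ψ^i·ψ_j) = δ_{ij} such that the unoriented Cardy condition τ_*(Q) = Σ_{i ∈ I} ψ^i·P(ψ_i) holds. Then for every φ ∈ E, t_A(τ^*(φ)·Q) equals the trace of the ℂ-linear endomorphism of E sending x to P(x)·φ. -/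

import Mathlib

/-- Proposition 3.4(2) of the paper, the baggy unoriented Cardy
condition. Given closed sector `(A,t_A,Q)`, open sector `(E,t)` with trace `t`,
boundary-bulk `τ^* = τb`, bulk-boundary `τ_* = τs`, adjointness, and the unoriented Cardy
condition for a basis `(ψ_i)` with dual family `(ψ^i)`, one has
`t_A(τ^*(φ) Q) = tr (x ↦ P(x)φ)` for every `φ ∈ E`. -/
theorem stmt18 {A E : Type*} [CommRing A] [Algebra ℂ A] [FiniteDimensional ℂ A]
    [Ring E] [Algebra ℂ E] [FiniteDimensional ℂ E]
    (tA : A →ₗ[ℂ] ℂ) (t : E →ₗ[ℂ] ℂ)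
    (ht : ∀ x y : E, t (x * y) = t (y * x))
    (τs : A →ₗ[ℂ] E) (τb : E →ₗ[ℂ] A)
    (hadj : ∀ (φ : E) (a : A), t (φ * τs a) = tA (τb φ * a))
    (P : E →ₗ[ℂ] E) (Q : A)
    {I : Type*} [Fintype I] [DecidableEq I]
    (ψ : Module.Basis I ℂ E) (ψd : I → E)
    (hdual : ∀ i j, t (ψd i * ψ j) = if i = j then 1 else 0)
    (hCardy : τs Q = ∑ i, ψd i * P (ψ i)) :
    ∀ φ : E, tA (τb φ * Q) =
      LinearMap.trace ℂ E (LinearMap.mulRight ℂ φ ∘ₗ P) := by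
  intro φ
  -- key: t (ψd i * x) = ψ.repr x i
  have hrepr : ∀ (i : I) (x : E), t (ψd i * x) = ψ.repr x i := by
    intro i x
    conv_lhs => rw [← ψ.sum_repr x]
    rw [Finset.mul_sum, map_sum]
    simp only [mul_smul_comm, map_smul, hdual, smul_eq_mul]
    simp [Finset.sum_ite_eq', Finset.mem_univ]
  rw [← hadj, hCardy, Finset.mul_sum, map_sum,
    LinearMap.trace_eq_matrix_trace ℂ ψ, Matrix.trace]
  refine Finset.sum_congr rfl fun i _ => ?_
  rw [Matrix.diag_apply, LinearMap.toMatrix_apply, ← hrepr]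
  rw [← mul_assoc, ht]
  rw [ht, mul_assoc, ht, mul_assoc]
  simp [LinearMap.mulRight_apply]
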